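/- Let δ : ℤ/4 → ℤ/4 × ℤ/4 be the diagonal group homomorphism k ↦ (k, k). Then for every natural number n, the induced homomorphism δ_* : H_{2n+1}(ℤ/4; ℤ) → H_{2n+1}(ℤ/4 × ℤ/4; ℤ) on integral group homology in odd degrees is injective. -/

import Mathlib

open CategoryTheory

namespace InhomogeneousChains

variable (k G : Type) [CommRing k] [Group G]

/-- The differential in the complex of inhomogeneous chains computing the group homology
of `G` with trivial coefficients `k`. -/
noncomputable def d (n : ℕ) : ((Fin (n + 1) → G) →₀ k) →ₗ[k] ((Fin n → G) →₀ k) :=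
  Finsupp.lift _ k _ fun g =>
    Finsupp.single (fun i => g i.succ) (1 : k) +
      ∑ j : Fin (n + 1), ((-1 : k) ^ ((j : ℕ) + 1)) •
        Finsupp.single (Fin.contractNth j (· * ·) g) (1 : k)

variable {M : Type} [AddCommGroup M] [Module k M]

lemma lift_single_one {X : Type} (f : X → M) (x : X) :
    Finsupp.lift M k X f (Finsupp.single x 1) = f x := by
  rw [Finsupp.lift_apply, Finsupp.sum_single_index (by simp), one_smul]

lemma d_single (n : ℕ) (g : Fin (n + 1) → G) :
    d k G n (Finsupp.single g 1) =
      Finsupp.single (fun i => g i.succ) (1 : k) +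
        ∑ j : Fin (n + 1), ((-1 : k) ^ ((j : ℕ) + 1)) •
          Finsupp.single (Fin.contractNth j (· * ·) g) (1 : k) :=
  lift_single_one k _ _

/-- Pairing the inhomogeneous chains with a function `f : Gⁿ → M` intertwines the chain
differential with the inhomogeneous cochain differential of the trivial representation. -/
lemma lift_comp_d (n : ℕ) (f : (Fin n → G) → M) :
    (Finsupp.lift M k (Fin n → G) f).comp (d k G n) =
      Finsupp.lift M k (Fin (n + 1) → G)
        ((inhomogeneousCochains.d (Rep.trivial k G M) n).hom f) := by
  apply Finsupp.lhom_ext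
  intro g b
  have hb : (Finsupp.single g b : (Fin (n + 1) → G) →₀ k) = b • Finsupp.single g 1 := by
    rw [Finsupp.smul_single, smul_eq_mul, mul_one]
  rw [LinearMap.comp_apply, hb, map_smul, map_smul, map_smul]
  congr 1
  rw [d_single, lift_single_one, map_add, map_sum, lift_single_one]
  rw [inhomogeneousCochains.d_hom_apply]
  congr 1
  refine Finset.sum_congr rfl fun j _ => ?_
  rw [map_smul, lift_single_one]

lemma d_comp_d (n : ℕ) : (d k G n).comp (d k G (n + 1)) = 0 := by
  have hid : Finsupp.lift ((Fin n → G) →₀ k) k (Fin n → G)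
      (fun g => Finsupp.single g 1) = LinearMap.id := by
    apply Finsupp.lhom_ext
    intro a b
    simp [Finsupp.lift_apply, Finsupp.sum_single_index, Finsupp.smul_single]
  have h0 : ((Finsupp.lift ((Fin n → G) →₀ k) k (Fin n → G)
      (fun g => Finsupp.single g 1)).comp (d k G n)).comp (d k G (n + 1)) =
      (d k G n).comp (d k G (n + 1)) := by
    rw [hid, LinearMap.id_comp]
  rw [← h0, lift_comp_d, lift_comp_d]
  have hdd : (inhomogeneousCochains.d (Rep.trivial k G ((Fin n → G) →₀ k)) (n + 1)).hom
      ((inhomogeneousCochains.d (Rep.trivial k G ((Fin n → G) →₀ k)) n).hom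
        (fun g => Finsupp.single g 1)) = 0 := by
    have := groupCohomology.inhomogeneousCochains.d_comp_d n
      (Rep.trivial k G ((Fin n → G) →₀ k))
    exact LinearMap.congr_fun (congrArg ModuleCat.Hom.hom this) _
  rw [hdd]
  exact map_zero _

/-- The complex of inhomogeneous chains of `G` with trivial coefficients in `k`. -/
noncomputable def chainsComplex : ChainComplex (ModuleCat k) ℕ :=
  ChainComplex.of (fun n => ModuleCat.of k ((Fin n → G) →₀ k)) (fun n => ModuleCat.ofHom (d k G n))
    (fun n => by
      ext : 1
      exact d_comp_d k G n)

lemma chainsComplex_d (n : ℕ) : (chainsComplex k G).d (n + 1) n = ModuleCat.ofHom (d k G n) :=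
  ChainComplex.of_d (fun n => ModuleCat.of k ((Fin n → G) →₀ k))
    (fun n => ModuleCat.ofHom (d k G n)) n

variable {G} {H : Type} [Group H]

lemma comp_contractNth {n : ℕ} (φ : G →* H) (j : Fin (n + 1)) (g : Fin (n + 1) → G) :
    φ ∘ Fin.contractNth j (· * ·) g = Fin.contractNth j (· * ·) (φ ∘ g) := by
  funext x
  simp only [Function.comp_apply]
  rcases lt_trichotomy (x : ℕ) (j : ℕ) with h | h | h
  · rw [Fin.contractNth_apply_of_lt _ _ _ _ h, Fin.contractNth_apply_of_lt _ _ _ _ h]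
    rfl
  · rw [Fin.contractNth_apply_of_eq _ _ _ _ h, Fin.contractNth_apply_of_eq _ _ _ _ h,
      map_mul]
    rfl
  · rw [Fin.contractNth_apply_of_gt _ _ _ _ h, Fin.contractNth_apply_of_gt _ _ _ _ h]
    rfl

lemma lmapDomain_single {X Y : Type} (f : X → Y) (a : X) (b : k) :
    Finsupp.lmapDomain k k f (Finsupp.single a b) = Finsupp.single (f a) b := by
  rw [Finsupp.lmapDomain_apply, Finsupp.mapDomain_single]

lemma d_comp_lmapDomain (φ : G →* H) (n : ℕ) :
    (d k H n).comp (Finsupp.lmapDomain k k (fun g : Fin (n + 1) → G => φ ∘ g)) =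
      (Finsupp.lmapDomain k k (fun g : Fin n → G => φ ∘ g)).comp (d k G n) := by
  apply Finsupp.lhom_ext
  intro g b
  have hb : (Finsupp.single g b : (Fin (n + 1) → G) →₀ k) = b • Finsupp.single g 1 := by
    rw [Finsupp.smul_single, smul_eq_mul, mul_one]
  rw [LinearMap.comp_apply, LinearMap.comp_apply, hb, map_smul, map_smul, map_smul, map_smul]
  congr 1
  rw [lmapDomain_single, d_single, d_single, map_add, map_sum, lmapDomain_single]
  congr 1
  refine Finset.sum_congr rfl fun j _ => ?_
  rw [map_smul, lmapDomain_single, comp_contractNth]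

/-- The map of inhomogeneous chain complexes induced by a group homomorphism. -/
noncomputable def chainsMap (φ : G →* H) : chainsComplex k G ⟶ chainsComplex k H where
  f n := ModuleCat.ofHom (Finsupp.lmapDomain k k (fun g : Fin n → G => φ ∘ g))
  comm' := by
    intro i j hij
    obtain rfl : j + 1 = i := hij
    rw [chainsComplex_d, chainsComplex_d]
    exact congrArg ModuleCat.ofHom (d_comp_lmapDomain k φ j)

end InhomogeneousChains

/-- The group homology `H_n(G; k)` of a group `G` with coefficients in the trivial
module `k`, defined as the `n`-th homology of the complex of inhomogeneous chains. -/
noncomputable def groupHomologyTriv (k G : Type) [CommRing k] [Group G] (n : ℕ) :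
    ModuleCat k :=
  (InhomogeneousChains.chainsComplex k G).homology n

/-- The homomorphism on group homology induced by a group homomorphism. -/
noncomputable def groupHomologyTrivMap (k : Type) [CommRing k] {G H : Type} [Group G]
    [Group H] (φ : G →* H) (n : ℕ) : groupHomologyTriv k G n ⟶ groupHomologyTriv k H n :=
  HomologicalComplex.homologyMap (InhomogeneousChains.chainsMap k φ) n

/-- The cyclic group of order 4, written multiplicatively. -/
abbrev C4 : Type := Multiplicative (ZMod 4)


section Aux

variable (k : Type) [CommRing k] {G H K : Type} [Group G] [Group H] [Group K]

lemma chainsMap_id : InhomogeneousChains.chainsMap k (MonoidHom.id G) =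
    𝟙 (InhomogeneousChains.chainsComplex k G) := by
  ext n x : 3
  simp only [InhomogeneousChains.chainsMap, HomologicalComplex.id_f]
  change Finsupp.mapDomain _ (x : (Fin n → G) →₀ k) = (x : (Fin n → G) →₀ k)
  exact Finsupp.mapDomain_id (v := x)

lemma chainsMap_comp (φ : G →* H) (ψ : H →* K) :
    InhomogeneousChains.chainsMap k (ψ.comp φ) =
      InhomogeneousChains.chainsMap k φ ≫ InhomogeneousChains.chainsMap k ψ := by
  ext n x : 3
  simp only [InhomogeneousChains.chainsMap, HomologicalComplex.comp_f]
  change Finsupp.mapDomain _ (x : (Fin n → G) →₀ k) = Finsupp.mapDomain _ (Finsupp.mapDomain _ (x : (Fin n → G) →₀ k))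
  exact Finsupp.mapDomain_comp (v := x) (f := fun g : Fin n → G => φ ∘ g)
    (g := fun g : Fin n → H => ψ ∘ g)

end Aux

/-- The diagonal group homomorphism `ℤ/4 → ℤ/4 × ℤ/4`, `k ↦ (k, k)`. -/
def diagC4 : C4 →* C4 × C4 := (MonoidHom.id C4).prod (MonoidHom.id C4)

/-- For every natural number `n`, the homomorphism
`δ_* : H_{2n+1}(ℤ/4; ℤ) → H_{2n+1}(ℤ/4 × ℤ/4; ℤ)` on integral group homology induced by
the diagonal homomorphism `δ : ℤ/4 → ℤ/4 × ℤ/4`, `k ↦ (k, k)`, is injective. -/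
theorem diagonal_induced_map_injective_on_odd_homology (n : ℕ) :
    Function.Injective (groupHomologyTrivMap ℤ diagC4 (2 * n + 1)) := by
  have key : groupHomologyTrivMap ℤ diagC4 (2 * n + 1) ≫
      groupHomologyTrivMap ℤ (MonoidHom.fst C4 C4) (2 * n + 1) = 𝟙 _ := by
    unfold groupHomologyTrivMap groupHomologyTriv
    rw [← HomologicalComplex.homologyMap_comp, ← chainsMap_comp]
    have h : (MonoidHom.fst C4 C4).comp diagC4 = MonoidHom.id C4 := by
      ext x; rfl
    rw [h, chainsMap_id, HomologicalComplex.homologyMap_id]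
  have hli : Function.LeftInverse (groupHomologyTrivMap ℤ (MonoidHom.fst C4 C4) (2 * n + 1))
      (groupHomologyTrivMap ℤ diagC4 (2 * n + 1)) := fun z => by
    simpa using congrArg (fun f => f z) key
  exact hli.injective
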